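/- For any well-formed parsing expression φ, if the empty string ε̂ is in L(φ) then the weak nullability predicate λ(φ) holds. -/
import Mathlib


namespace PEG

variable {N σ : Type}

/-- Parsing expressions. -/
inductive PExp (N σ : Type) where
  | chr (a : σ)
  | eps
  | fail
  | nt (A : N)
  | neg (α : PExp N σ)
  | seq (α β : PExp N σ)
  | alt (α β : PExp N σ)

/-- Big-step PEG semantics: `Eval R φ s r` means `φ(s) = r`
(`none` = fail, `some s'` = matched leaving suffix `s'`). -/
inductive Eval (R : N → PExp N σ) : PExp N σ → List σ → Option (List σ) → Prop where
  | chr_succ (a : σ) (s : List σ) : Eval R (.chr a) (a :: s) (some s)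
  | chr_fail (a : σ) (s : List σ) : (∀ s', s ≠ a :: s') → Eval R (.chr a) s none
  | eps (s : List σ) : Eval R .eps s (some s)
  | fail (s : List σ) : Eval R .fail s none
  | nt (A : N) (s : List σ) (r : Option (List σ)) :
      Eval R (R A) s r → Eval R (.nt A) s r
  | neg_succ (α : PExp N σ) (s : List σ) :
      Eval R α s none → Eval R (.neg α) s (some s)
  | neg_fail (α : PExp N σ) (s s' : List σ) :
      Eval R α s (some s') → Eval R (.neg α) s none
  | seq_succ (α β : PExp N σ) (s s' : List σ) (r : Option (List σ)) :
      Eval R α s (some s') → Eval R β s' r → Eval R (.seq α β) s r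
  | seq_fail (α β : PExp N σ) (s : List σ) :
      Eval R α s none → Eval R (.seq α β) s none
  | alt_succ (α β : PExp N σ) (s s' : List σ) :
      Eval R α s (some s') → Eval R (.alt α β) s (some s')
  | alt_fail (α β : PExp N σ) (s : List σ) (r : Option (List σ)) :
      Eval R α s none → Eval R β s r → Eval R (.alt α β) s r

/-- The language of a parsing expression. -/
def Lang (R : N → PExp N σ) (φ : PExp N σ) : Set (List σ) :=
  {s | ∃ s', Eval R φ s (some s')}

/-- Nullability predicate ν (least fixed point). -/
inductive Nu (R : N → PExp N σ) : PExp N σ → Prop where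
  | eps : Nu R .eps
  | nt (A : N) : Nu R (R A) → Nu R (.nt A)
  | seq (α β : PExp N σ) : Nu R α → Nu R β → Nu R (.seq α β)
  | altl (α β : PExp N σ) : Nu R α → Nu R (.alt α β)
  | altr (α β : PExp N σ) : Nu R β → Nu R (.alt α β)

/-- Weak nullability predicate λ (least fixed point). -/
inductive Lam (R : N → PExp N σ) : PExp N σ → Prop where
  | eps : Lam R .eps
  | nt (A : N) : Lam R (R A) → Lam R (.nt A)
  | neg (α : PExp N σ) : Lam R (.neg α)
  | seq (α β : PExp N σ) : Lam R α → Lam R β → Lam R (.seq α β)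
  | altl (α β : PExp N σ) : Lam R α → Lam R (.alt α β)
  | altr (α β : PExp N σ) : Lam R β → Lam R (.alt α β)

/-- One step of left-expansion: `LEStep R φ γ` iff `γ ∈ LE(φ)`. -/
inductive LEStep (R : N → PExp N σ) : PExp N σ → PExp N σ → Prop where
  | nt (A : N) : LEStep R (.nt A) (R A)
  | neg (α : PExp N σ) : LEStep R (.neg α) α
  | seq1 (α β : PExp N σ) : LEStep R (.seq α β) α
  | seq2 (α β : PExp N σ) : Lam R α → LEStep R (.seq α β) β
  | alt1 (α β : PExp N σ) : LEStep R (.alt α β) α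
  | alt2 (α β : PExp N σ) : LEStep R (.alt α β) β

/-- One step of the immediate subexpression function SUB. -/
inductive SubStep (R : N → PExp N σ) : PExp N σ → PExp N σ → Prop where
  | nt (A : N) : SubStep R (.nt A) (R A)
  | neg (α : PExp N σ) : SubStep R (.neg α) α
  | seq1 (α β : PExp N σ) : SubStep R (.seq α β) α
  | seq2 (α β : PExp N σ) : SubStep R (.seq α β) β
  | alt1 (α β : PExp N σ) : SubStep R (.alt α β) α
  | alt2 (α β : PExp N σ) : SubStep R (.alt α β) β

/-- LE⁺(φ): the transitive closure of left-expansion. -/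
def LEPlus (R : N → PExp N σ) (φ : PExp N σ) : Set (PExp N σ) :=
  {γ | Relation.TransGen (LEStep R) φ γ}

/-- SUB⁺(φ): the transitive closure of the subexpression function. -/
def SubPlus (R : N → PExp N σ) (φ : PExp N σ) : Set (PExp N σ) :=
  {γ | Relation.TransGen (SubStep R) φ γ}

/-- A parsing expression is well-formed if no expression in {φ} ∪ SUB⁺(φ)
left-recursively expands itself. -/
def WellFormed (R : N → PExp N σ) (φ : PExp N σ) : Prop :=
  ∀ γ, (γ = φ ∨ γ ∈ SubPlus R φ) → γ ∉ LEPlus R γ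

end PEG

theorem PEG.eval_length {N σ : Type} {R : N → PEG.PExp N σ} {φ : PEG.PExp N σ}
    {s s' : List σ} (h : PEG.Eval R φ s (some s')) : s'.length ≤ s.length := by
  generalize hr : some s' = r at h
  induction h generalizing s' with
  | chr_succ => cases hr; simp
  | chr_fail => cases hr
  | fail => cases hr
  | neg_fail => cases hr
  | seq_fail => cases hr
  | eps => cases hr; simp
  | nt _ _ _ _ ih => exact ih hr
  | neg_succ => cases hr; simp
  | seq_succ _ _ _ _ _ _ _ ih1 ih2 => exact (ih2 hr).trans (ih1 rfl)
  | alt_succ _ _ _ _ _ ih => exact ih hr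
  | alt_fail _ _ _ _ _ _ _ ih => exact ih hr

theorem PEG.eval_nil_lam {N σ : Type} {R : N → PEG.PExp N σ} {φ : PEG.PExp N σ}
    {s' : List σ} (h : PEG.Eval R φ [] (some s')) : PEG.Lam R φ := by
  generalize hs : ([] : List σ) = s at h
  generalize hr : some s' = r at h
  induction h generalizing s' with
  | chr_succ => cases hs
  | chr_fail => cases hr
  | eps => exact .eps
  | fail => cases hr
  | nt _ _ _ _ ih => exact .nt _ (ih hs hr)
  | neg_succ => exact .neg _
  | neg_fail => cases hr
  | seq_succ α β s t r h1 h2 ih1 ih2 =>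
    cases hs
    have : t = [] := List.length_eq_zero_iff.mp (Nat.le_zero.mp (PEG.eval_length h1))
    exact .seq _ _ (ih1 rfl rfl) (ih2 this.symm hr)
  | seq_fail => cases hr
  | alt_succ _ _ _ _ _ ih => exact .altl _ _ (ih hs hr)
  | alt_fail _ _ _ _ _ _ _ ih => exact .altr _ _ (ih hs hr)

/-- For any well-formed parsing expression φ, if the empty string
is in L(φ) then λ(φ) holds. -/
theorem weak_nullability {N σ : Type} (R : N → PEG.PExp N σ) (φ : PEG.PExp N σ)
    (hwf : PEG.WellFormed R φ) (h : ([] : List σ) ∈ PEG.Lang R φ) :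
    PEG.Lam R φ := by obtain ⟨s', hs⟩ := h; exact PEG.eval_nil_lam hs
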